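/- For every natural number n ≥ 0, ∫_{−1}^{1} (1 − Pₙ(x)) / (1 − x) dx = 2·Hₙ, where Pₙ is the n-th Legendre polynomial and Hₙ = Σ_{k=1}^{n} 1/k is the n-th harmonic number (H₀ = 0). -/

import Mathlib

open Polynomial intervalIntegral

/-- The `n`-th Legendre polynomial via the Rodrigues formula
`Pₙ = (1/(2ⁿ n!)) dⁿ/dxⁿ (x²−1)ⁿ`. -/
noncomputable def legendrePoly (n : ℕ) : Polynomial ℝ :=
  Polynomial.C (1 / ((2 : ℝ) ^ n * (Nat.factorial n : ℝ))) *
    (Polynomial.derivative^[n] ((Polynomial.X ^ 2 - 1) ^ n))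

lemma legendre_eval (n : ℕ) (x : ℝ) :
    (legendrePoly n).eval x =
      ∑ k ∈ Finset.range (n+1),
        (n.choose k : ℝ)^2 * ((x-1)/2)^k * ((x+1)/2)^(n-k) := by
  have h1 : ((X:ℝ[X])^2 - 1)^n = ((X - C 1)^n) * ((X - C (-1))^n) := by
    rw [← mul_pow]; congr 1
    simp only [map_one, map_neg, sub_neg_eq_add]; ring
  rw [legendrePoly, h1, Polynomial.iterate_derivative_mul]
  simp only [Polynomial.iterate_derivative_X_sub_pow]
  rw [eval_mul, eval_C, Polynomial.eval_finset_sum, Finset.mul_sum]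
  refine Finset.sum_congr rfl fun k hk => ?_
  have hkn : k ≤ n := Nat.lt_succ_iff.mp (Finset.mem_range.mp hk)
  have h2 : n - (n - k) = k := Nat.sub_sub_self hkn
  simp only [eval_smul, eval_mul, eval_pow, eval_sub, eval_X, eval_C, smul_eq_mul,
    nsmul_eq_mul, Nat.descFactorial_eq_factorial_mul_choose, h2, Nat.choose_symm hkn]
  have hfac : (n.choose k : ℝ) * k.factorial * (n-k).factorial = n.factorial := by
    exact_mod_cast congrArg (Nat.cast : ℕ → ℝ) (Nat.choose_mul_factorial_mul_factorial hkn)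
  have h2n : (2:ℝ)^k * 2^(n-k) = 2^n := by
    rw [← pow_add, Nat.add_sub_cancel' hkn]
  have hn0 : (n.factorial : ℝ) ≠ 0 := Nat.cast_ne_zero.mpr n.factorial_ne_zero
  push_cast
  rw [div_pow, div_pow, ← hfac, ← h2n]
  have hk0 : (k.factorial : ℝ) ≠ 0 := Nat.cast_ne_zero.mpr k.factorial_ne_zero
  have hnk0 : ((n-k).factorial : ℝ) ≠ 0 := Nat.cast_ne_zero.mpr (n-k).factorial_ne_zero
  rcases eq_or_ne ((n.choose k : ℝ)) 0 with hc | hc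
  · simp [hc]
  · field_simp
    simp only [eval_mul, eval_natCast]
    ring

lemma alt_choose_sum (n : ℕ) :
    ∑ j ∈ Finset.range (n+1), (-1:ℝ)^j * (n.choose j) / (j+1) = 1/(n+1) := by
  have key : ∀ j, (n.choose j : ℝ) / (j+1) = ((n+1).choose (j+1)) / (n+1) := by
    intro j
    have h := Nat.add_one_mul_choose_eq n j
    have h' : ((n+1) * n.choose j : ℝ) = ((n+1).choose (j+1)) * (j+1) := by
      exact_mod_cast congrArg (Nat.cast : ℕ → ℝ) h
    rw [div_eq_div_iff (by positivity) (by positivity)]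
    push_cast at h' ⊢
    linarith [h']
  have halt : ∑ j ∈ Finset.range (n+1), (-1:ℝ)^j * ((n+1).choose (j+1)) = 1 := by
    have h0 := Int.alternating_sum_range_choose (n := n+1)
    rw [if_neg (Nat.succ_ne_zero n)] at h0
    have h0' : ∑ i ∈ Finset.range (n+2), (-1:ℝ)^i * ((n+1).choose i) = 0 := by
      exact_mod_cast congrArg (Int.cast : ℤ → ℝ) h0
    rw [Finset.sum_range_succ'] at h0'
    simp only [pow_succ, Nat.choose_zero_right, pow_zero, Nat.cast_one, mul_one, one_mul] at h0'
    have : ∑ i ∈ Finset.range (n+1), (-1:ℝ)^i * (-1) * ((n+1).choose (i+1)) = -1 := by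
      linarith
    calc ∑ j ∈ Finset.range (n+1), (-1:ℝ)^j * ((n+1).choose (j+1))
        = -∑ i ∈ Finset.range (n+1), (-1:ℝ)^i * (-1) * ((n+1).choose (i+1)) := by
          rw [← Finset.sum_neg_distrib]; exact Finset.sum_congr rfl fun i _ => by ring
      _ = 1 := by rw [this]; ring
  calc ∑ j ∈ Finset.range (n+1), (-1:ℝ)^j * (n.choose j) / (j+1)
      = ∑ j ∈ Finset.range (n+1), (-1:ℝ)^j * ((n+1).choose (j+1)) / (n+1) := by
        refine Finset.sum_congr rfl fun j _ => ?_
        rw [mul_div_assoc, key j, mul_div_assoc]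
    _ = 1/(n+1) := by rw [← Finset.sum_div, halt]

lemma alt_harmonic (n : ℕ) :
    ∑ j ∈ Finset.range n, (-1:ℝ)^j * (n.choose (j+1)) / (j+1) =
      ∑ j ∈ Finset.range n, (1:ℝ)/(j+1) := by
  induction n with
  | zero => simp
  | succ n ih =>
    have hsplit : ∑ j ∈ Finset.range (n+1), (-1:ℝ)^j * ((n+1).choose (j+1)) / (j+1)
        = (∑ j ∈ Finset.range (n+1), (-1:ℝ)^j * (n.choose j) / (j+1))
          + ∑ j ∈ Finset.range (n+1), (-1:ℝ)^j * (n.choose (j+1)) / (j+1) := by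
      rw [← Finset.sum_add_distrib]
      refine Finset.sum_congr rfl fun j _ => ?_
      rw [Nat.choose_succ_succ]
      push_cast
      ring
    have htail : ∑ j ∈ Finset.range (n+1), (-1:ℝ)^j * (n.choose (j+1)) / (j+1)
        = ∑ j ∈ Finset.range n, (-1:ℝ)^j * (n.choose (j+1)) / (j+1) := by
      rw [Finset.sum_range_succ, Nat.choose_succ_self]
      simp
    rw [hsplit, htail, alt_choose_sum, ih, Finset.sum_range_succ]
    push_cast
    ring

lemma beta_int (a b : ℕ) :
    ∫ x in (-1:ℝ)..1, ((1-x)/2)^a * ((1+x)/2)^b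
      = 2 * a.factorial * b.factorial / (a+b+1).factorial := by
  induction a generalizing b with
  | zero =>
    simp only [pow_zero, one_mul]
    have hF : ∀ x ∈ Set.uIcc (-1:ℝ) 1, HasDerivAt (fun x : ℝ => 2/(b+1) * ((1+x)/2)^(b+1))
        (((1+x)/2)^b) x := by
      intro x _
      have h1 : HasDerivAt (fun x : ℝ => (1+x)/2) (1/2) x := by
        simpa using ((hasDerivAt_id x).const_add 1).div_const 2
      have h2 := (h1.pow (b+1)).const_mul (2/(b+1) : ℝ)
      refine h2.congr_deriv ?_
      simp only [Nat.add_sub_cancel]; push_cast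
      have hb : ((b:ℝ)+1) ≠ 0 := by positivity
      field_simp
    rw [integral_eq_sub_of_hasDerivAt hF (by
      apply Continuous.intervalIntegrable; fun_prop)]
    have hb : ((b:ℝ)+1) ≠ 0 := by positivity
    rw [Nat.factorial_succ]
    push_cast
    field_simp
    ring
  | succ a ih =>
    have hu : ∀ x ∈ Set.uIcc (-1:ℝ) 1, HasDerivAt (fun x : ℝ => ((1-x)/2)^(a+1))
        (-((a:ℝ)+1)/2 * ((1-x)/2)^a) x := by
      intro x _
      have h1 : HasDerivAt (fun x : ℝ => (1-x)/2) (-1/2) x := by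
        simpa using ((hasDerivAt_id x).const_sub 1).div_const 2
      have h2 := h1.pow (a+1)
      refine h2.congr_deriv ?_
      push_cast
      ring
    have hv : ∀ x ∈ Set.uIcc (-1:ℝ) 1, HasDerivAt (fun x : ℝ => 2/(b+1) * ((1+x)/2)^(b+1))
        (((1+x)/2)^b) x := by
      intro x _
      have h1 : HasDerivAt (fun x : ℝ => (1+x)/2) (1/2) x := by
        simpa using ((hasDerivAt_id x).const_add 1).div_const 2
      have h2 := (h1.pow (b+1)).const_mul (2/(b+1) : ℝ)
      refine h2.congr_deriv ?_
      simp only [Nat.add_sub_cancel]; push_cast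
      have hb : ((b:ℝ)+1) ≠ 0 := by positivity
      field_simp
    rw [integral_mul_deriv_eq_deriv_mul hu hv
      (by apply Continuous.intervalIntegrable; fun_prop)
      (by apply Continuous.intervalIntegrable; fun_prop)]
    have harr : ∀ x : ℝ, -((a:ℝ)+1)/2 * ((1-x)/2)^a * (2/(b+1) * ((1+x)/2)^(b+1))
        = (-((a:ℝ)+1)/(b+1)) * (((1-x)/2)^a * ((1+x)/2)^(b+1)) := by
      intro x
      have hb : ((b:ℝ)+1) ≠ 0 := by positivity
      field_simp
    simp only [harr]
    rw [integral_const_mul, ih (b+1)]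
    have hb : ((b:ℝ)+1) ≠ 0 := by positivity
    have hab : ((a+b+2).factorial : ℝ) ≠ 0 := by positivity
    have hfact1 : ((a+1).factorial : ℝ) = (a+1) * a.factorial := by
      rw [Nat.factorial_succ]; push_cast; ring
    have hfact2 : ((b+1).factorial : ℝ) = (b+1) * b.factorial := by
      rw [Nat.factorial_succ]; push_cast; ring
    have heq : a + (b+1) + 1 = a + 1 + b + 1 := by omega
    rw [heq] at *
    norm_num
    rw [hfact1, hfact2]
    have : a + 1 + b + 1 = (a+1) + b + 1 := by omega
    field_simp
    ring

/-- Legendre/harmonic-number identity: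
`∫_{−1}^{1} (1 − Pₙ(x))/(1 − x) dx = 2 Hₙ`, where `Hₙ = Σ_{k=1}^n 1/k`. -/
theorem legendre_harmonic_integral (n : ℕ) :
    ∫ x in (-1 : ℝ)..1, (1 - (legendrePoly n).eval x) / (1 - x) =
      2 * ∑ k ∈ Finset.Icc 1 n, (1 : ℝ) / k := by
  set c : ℕ → ℝ := fun j => ((n.choose (j+1) : ℝ) - (-1)^(j+1) * (n.choose (j+1))^2) / 2 with hc
  set g : ℝ → ℝ := fun x => ∑ j ∈ Finset.range n, c j * (((1-x)/2)^j * ((1+x)/2)^(n-1-j))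
    with hg
  -- pointwise identity away from x = 1
  have hpt : ∀ x : ℝ, x ≠ 1 → (1 - (legendrePoly n).eval x) / (1 - x) = g x := by
    intro x hx
    have hx1 : (1 - x) ≠ 0 := sub_ne_zero.mpr (Ne.symm hx)
    rw [div_eq_iff hx1, legendre_eval]
    have hone : (1:ℝ) = ∑ k ∈ Finset.range (n+1),
        ((1-x)/2)^k * ((1+x)/2)^(n-k) * (n.choose k : ℝ) := by
      have h := add_pow ((1-x)/2 : ℝ) ((1+x)/2) n
      have h2 : ((1-x)/2 + (1+x)/2 : ℝ) = 1 := by ring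
      rw [h2, one_pow] at h
      exact h
    nth_rewrite 1 [hone]
    rw [← Finset.sum_sub_distrib]
    have hterm : ∀ k, ((1-x)/2)^k * ((1+x)/2)^(n-k) * (n.choose k : ℝ)
        - (n.choose k : ℝ)^2 * ((x-1)/2)^k * ((x+1)/2)^(n-k)
        = ((n.choose k : ℝ) - (-1)^k * (n.choose k)^2) * (((1-x)/2)^k * ((1+x)/2)^(n-k)) := by
      intro k
      have hneg : ((x-1)/2 : ℝ)^k = (-1)^k * ((1-x)/2)^k := by
        rw [show ((x-1)/2:ℝ) = -((1-x)/2) by ring, neg_pow]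
      rw [hneg]; ring
    simp only [hterm]
    rw [Finset.sum_range_succ']
    simp only [Nat.choose_zero_right, Nat.cast_one, pow_zero, one_pow, one_mul, mul_one]
    rw [sub_self, zero_mul, add_zero, hg, Finset.sum_mul]
    refine Finset.sum_congr rfl fun j hj => ?_
    have hsub : n - (j+1) = n - 1 - j := by omega
    rw [hsub, pow_succ]
    simp only [hc]
    ring
  -- replace the integrand a.e.
  have hcongr : (∫ x in (-1:ℝ)..1, (1 - (legendrePoly n).eval x) / (1 - x))
      = ∫ x in (-1:ℝ)..1, g x := by
    apply intervalIntegral.integral_congr_ae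
    have h1 : ∀ᵐ (x:ℝ), x ≠ 1 := by
      rw [MeasureTheory.ae_iff]
      convert Real.volume_singleton (a := 1) using 2
      ext y; simp
    filter_upwards [h1] with x hx _ using hpt x hx
  rw [hcongr]
  have hgint : (∫ x in (-1:ℝ)..1, g x)
      = ∑ j ∈ Finset.range n,
          ∫ x in (-1:ℝ)..1, c j * (((1-x)/2)^j * ((1+x)/2)^(n-1-j)) := by
    rw [hg]
    exact intervalIntegral.integral_finset_sum
      (fun j _ => (Continuous.intervalIntegrable (by fun_prop) _ _))
  rw [hgint]
  have hint : ∀ j ∈ Finset.range n,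
      (∫ x in (-1:ℝ)..1, c j * (((1-x)/2)^j * ((1+x)/2)^(n-1-j)))
        = 1/(j+1) + (-1)^j * (n.choose (j+1) : ℝ)/(j+1) := by
    intro j hj
    have hjn : j < n := Finset.mem_range.mp hj
    rw [intervalIntegral.integral_const_mul, beta_int j (n-1-j)]
    have hidx : j + (n-1-j) + 1 = n := by omega
    rw [hidx]
    have hfac : (n.factorial : ℝ)
        = (n.choose (j+1)) * ((j+1) * j.factorial) * (n-1-j).factorial := by
      have h := Nat.choose_mul_factorial_mul_factorial (show j+1 ≤ n by omega)
      have h2 : n - (j+1) = n-1-j := by omega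
      rw [h2, Nat.factorial_succ] at h
      exact_mod_cast congrArg (Nat.cast : ℕ → ℝ) h.symm
    have hC : (0:ℝ) < (n.choose (j+1) : ℝ) := by
      exact_mod_cast Nat.choose_pos (show j+1 ≤ n by omega)
    have hj1 : ((j:ℝ)+1) ≠ 0 := by positivity
    have hjf : (j.factorial : ℝ) ≠ 0 := by positivity
    have hnjf : ((n-1-j).factorial : ℝ) ≠ 0 := by positivity
    rw [hfac]
    simp only [hc]
    push_cast
    field_simp
    ring
  rw [Finset.sum_congr rfl hint, Finset.sum_add_distrib]
  have halt : ∑ j ∈ Finset.range n, (-1:ℝ)^j * (n.choose (j+1) : ℝ)/(j+1)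
      = ∑ j ∈ Finset.range n, (1:ℝ)/(j+1) := alt_harmonic n
  rw [halt]
  have hIcc : ∑ k ∈ Finset.Icc 1 n, (1:ℝ)/k = ∑ j ∈ Finset.range n, (1:ℝ)/(j+1) := by
    rw [show Finset.Icc 1 n = Finset.Ico 1 (n+1) by rw [Finset.Ico_add_one_right_eq_Icc],
      Finset.sum_Ico_eq_sum_range]
    simp only [Nat.add_sub_cancel]
    refine Finset.sum_congr rfl fun j _ => ?_
    push_cast
    rw [add_comm]
  rw [hIcc]
  ring
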